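/- Suppose that for every acyclic concurrent stochastic Büchi game G' (countable states, countable Max action sets, finite Min action sets) and every ε > 0, Max has a 1-bit strategy σ' such that (1) σ' started in mode 0 is multiplicatively ε-optimal from every state, (2) all memory updates of σ' are Dirac, and (3) σ' is deterministic if G' is turn-based. Then for every concurrent stochastic Büchi game G (countable states, countable Max action sets, finite Min action sets) and every ε > 0, Max has a 1-bit Markov strategy σ such that (1) σ started with step counter 0 and bit 0 is multiplicatively ε-optimal from every state, (2) all memory updates of σ are Dirac, and (3) σ is deterministic if G is turn-based. -/

import Mathlib

open scoped ENNReal Classical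
open MeasureTheory

/-- A concurrent stochastic game: a set of states `S`, for each state a nonempty
countable set of Max actions and a nonempty finite set of Min actions, and for each
state and action pair a probability distribution on successor states. -/
structure ConcurrentGame (S A B : Type) where
  actA : S → Set A
  actB : S → Set B
  actA_nonempty : ∀ s, (actA s).Nonempty
  actA_countable : ∀ s, (actA s).Countable
  actB_nonempty : ∀ s, (actB s).Nonempty
  actB_finite : ∀ s, (actB s).Finite
  trans : S → A → B → PMF S

namespace ConcurrentGame

/-- A history: the chronological list of (state, Max action, Min action) steps so far,
together with the current (final) state. -/
abbrev Hist (S A B : Type) : Type := List (S × A × B) × S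

/-- A play: an infinite sequence of (state, Max action, Min action) triples. -/
abbrev Play (S A B : Type) : Type := ℕ → S × A × B

/-- Plays carry the product (cylinder) sigma-algebra, each (countable, discrete)
factor carrying the discrete sigma-algebra. -/
instance playMeasurableSpace (S A B : Type) : MeasurableSpace (Play S A B) :=
  @MeasurableSpace.pi ℕ (fun _ => S × A × B) (fun _ => ⊤)

/-- The cylinder sigma-algebra on infinite state sequences. -/
def seqMS (S : Type) : MeasurableSpace (ℕ → S) :=
  @MeasurableSpace.pi ℕ (fun _ => S) (fun _ => ⊤)

variable {S A B : Type}

/-- A Max strategy: a mixed action (supported on the legal Max actions at the final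
state) for every history. -/
structure MaxStrategy (G : ConcurrentGame S A B) where
  toFun : Hist S A B → PMF A
  mem_actA : ∀ h : Hist S A B, ∀ a ∈ (toFun h).support, a ∈ G.actA h.2

/-- A Min strategy: a mixed action (supported on the legal Min actions at the final
state) for every history. -/
structure MinStrategy (G : ConcurrentGame S A B) where
  toFun : Hist S A B → PMF B
  mem_actB : ∀ h : Hist S A B, ∀ b ∈ (toFun h).support, b ∈ G.actB h.2

/-- The state at position `i` of a history with step list `l` and final state `s`. -/
def stateAt (l : List (S × A × B)) (s : S) (i : ℕ) : S :=
  match l[i]? with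
  | some x => x.1
  | none => s

/-- The first state of the step list `l`, or `s` if `l` is empty. -/
def headState (l : List (S × A × B)) (s : S) : S :=
  match l with
  | [] => s
  | x :: _ => x.1

/-- Shift a function on histories by prepending a fixed first step. -/
def shiftF {α : Type} (f : Hist S A B → α) (x : S × A × B) : Hist S A B → α :=
  fun h => f (x :: h.1, h.2)

/-- The probability that the play from `s0` under the given (raw) strategies follows
exactly the history with step list `l` and final state `s`. -/
noncomputable def histProb (G : ConcurrentGame S A B) :
    (Hist S A B → PMF A) → (Hist S A B → PMF B) → S → List (S × A × B) → S → ℝ≥0∞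
  | _, _, s0, [], s => if s = s0 then 1 else 0
  | f, g, s0, (s', a, b) :: l, s =>
    if s' = s0 then
      f ([], s0) a * g ([], s0) b * G.trans s0 a b (headState l s) *
        histProb G (shiftF f (s0, a, b)) (shiftF g (s0, a, b)) (headState l s) l s
    else 0

/-- The cylinder set of plays extending the history `(l, s)`. -/
def cylinder (l : List (S × A × B)) (s : S) : Set (Play S A B) :=
  {ω | (∀ i : Fin l.length, ω i = l.get i) ∧ (ω l.length).1 = s}

/-- `P` is the probability measure on plays induced by the initial state `s0` and the
strategies `σ` and `π` (characterized by its values on all cylinder sets; by the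
Ionescu–Tulcea theorem such a measure exists and is unique on the cylinder
sigma-algebra). -/
def Consistent (G : ConcurrentGame S A B) (s0 : S) (σ : G.MaxStrategy)
    (π : G.MinStrategy) (P : Measure (Play S A B)) : Prop :=
  IsProbabilityMeasure P ∧
    ∀ (l : List (S × A × B)) (s : S), P (cylinder l s) = G.histProb σ.toFun π.toFun s0 l s

/-- The value of state `s0` for objective `E`:
`sup` over Max strategies of `inf` over Min strategies of the probability of `E`. -/
noncomputable def val (G : ConcurrentGame S A B) (E : Set (Play S A B)) (s0 : S) : ℝ≥0∞ :=
  ⨆ σ : G.MaxStrategy, ⨅ π : G.MinStrategy,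
    ⨅ P : {P : Measure (Play S A B) // Consistent G s0 σ π P}, P.1 E

/-- The Büchi objective: visit the target set `T` infinitely often. -/
def buchi {S A B : Type} (T : Set S) : Set (Play S A B) :=
  {ω | ∀ n : ℕ, ∃ m, n ≤ m ∧ (ω m).1 ∈ T}

/-- The transience objective: every state occurs only finitely often. -/
def transient {S A B : Type} : Set (Play S A B) :=
  {ω | ∀ s : S, {n : ℕ | (ω n).1 = s}.Finite}

/-- The reachability objective: visit `T` at least once. -/
def reach {S A B : Type} (T : Set S) : Set (Play S A B) :=
  {ω | ∃ n : ℕ, (ω n).1 ∈ T}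

/-- Reach the state `t` while staying inside `L` before the visit. -/
def reachVia {S A B : Type} (L : Set S) (t : S) : Set (Play S A B) :=
  {ω | ∃ n : ℕ, (ω n).1 = t ∧ ∀ i < n, (ω i).1 ∈ L}

/-- A strategy based on a memory set `M`: a map choosing a mixed action from
(mode, state), and a (possibly randomized) memory update map. -/
structure MemoryStrategy (G : ConcurrentGame S A B) (M : Type) where
  act : M → S → PMF A
  upd : S → M → A → B → S → PMF M
  act_mem : ∀ m s, ∀ a ∈ (act m s).support, a ∈ G.actA s

variable {M : Type}

/-- The probability that the play from `s0` follows exactly the history with step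
list `l` and final state `s`, when Max plays the memory-based strategy `(act, upd)`
with current (private, possibly randomized) memory mode `m` and Min plays the raw
strategy `g`. The sum ranges over the possible next memory modes. -/
noncomputable def histProbMem (G : ConcurrentGame S A B) (act : M → S → PMF A)
    (upd : S → M → A → B → S → PMF M) :
    (Hist S A B → PMF B) → M → S → List (S × A × B) → S → ℝ≥0∞
  | _, _, s0, [], s => if s = s0 then 1 else 0
  | g, m, s0, (s', a, b) :: l, s =>
    if s' = s0 then
      act m s0 a * g ([], s0) b * G.trans s0 a b (headState l s) *
        ∑' m' : M, upd s0 m a b (headState l s) m' *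
          histProbMem G act upd (shiftF g (s0, a, b)) m' (headState l s) l s
    else 0

/-- `P` is the probability measure on plays induced by the initial state `s0`, the
memory-based Max strategy `τ` with initial mode `m0`, and the Min strategy `π`
(characterized by its values on all cylinder sets). -/
def ConsistentMem (G : ConcurrentGame S A B) (s0 : S) (τ : MemoryStrategy G M)
    (m0 : M) (π : G.MinStrategy) (P : Measure (Play S A B)) : Prop :=
  IsProbabilityMeasure P ∧
    ∀ (l : List (S × A × B)) (s : S),
      P (cylinder l s) = histProbMem G τ.act τ.upd π.toFun m0 s0 l s

/-- All memory updates are Dirac (deterministic). -/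
def MemoryStrategy.DiracUpdates {G : ConcurrentGame S A B} (τ : MemoryStrategy G M) : Prop :=
  ∀ s m a b s', ∃ m', τ.upd s m a b s' = PMF.pure m'

/-- All chosen mixed actions are Dirac, i.e. the strategy is deterministic. -/
def MemoryStrategy.Deterministic {G : ConcurrentGame S A B} (τ : MemoryStrategy G M) : Prop :=
  ∀ m s, ∃ a, τ.act m s = PMF.pure a

/-- For memory of the form `ℕ × F`: the first component is a step counter,
deterministically incremented by 1 at every step. -/
def MemoryStrategy.StepCounter {G : ConcurrentGame S A B} {F : Type}
    (τ : MemoryStrategy G (ℕ × F)) : Prop :=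
  ∀ s m a b s', ∀ m' ∈ (τ.upd s m a b s').support, m'.1 = m.1 + 1

/-- A deterministic strategy: every chosen mixed action is Dirac. -/
def MaxStrategy.Deterministic {G : ConcurrentGame S A B} (σ : G.MaxStrategy) : Prop :=
  ∀ h, ∃ a, σ.toFun h = PMF.pure a

/-- A memoryless strategy: the chosen mixed action depends only on the current state. -/
def MaxStrategy.Memoryless {G : ConcurrentGame S A B} (σ : G.MaxStrategy) : Prop :=
  ∀ h h' : Hist S A B, h.2 = h'.2 → σ.toFun h = σ.toFun h'

/-- A Markov strategy: the chosen mixed action depends only on the current state and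
the number of elapsed steps. -/
def MaxStrategy.IsMarkov {G : ConcurrentGame S A B} (σ : G.MaxStrategy) : Prop :=
  ∀ h h' : Hist S A B, h.1.length = h'.1.length → h.2 = h'.2 → σ.toFun h = σ.toFun h'

/-- Turn-based: in every state, the transition distribution depends on only one
player's action. -/
def TurnBased (G : ConcurrentGame S A B) : Prop :=
  ∀ s : S,
    (∀ a ∈ G.actA s, ∀ a' ∈ G.actA s, ∀ b ∈ G.actB s, G.trans s a b = G.trans s a' b) ∨
    (∀ a ∈ G.actA s, ∀ b ∈ G.actB s, ∀ b' ∈ G.actB s, G.trans s a b = G.trans s a b')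

/-- Acyclic: no play can visit any state more than once, i.e. there is no cycle of
legal transitions. -/
def Acyclic (G : ConcurrentGame S A B) : Prop :=
  ∀ (n : ℕ) (f : ℕ → S) (a : ℕ → A) (b : ℕ → B),
    (∀ i ≤ n, a i ∈ G.actA (f i) ∧ b i ∈ G.actB (f i) ∧
      f (i + 1) ∈ (G.trans (f i) (a i) (b i)).support) →
    f (n + 1) ≠ f 0

end ConcurrentGame

namespace ConcurrentGame
section AcyclicReduction

variable {S A B : Type}

/-- Forget the step counter of an annotated step. -/
def projStep : (S × ℕ) × A × B → S × A × B := fun x => (x.1.1, x.2)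

/-- Forget the step counters of an annotated history. -/
def projHist : Hist (S × ℕ) A B → Hist S A B := fun h => (h.1.map projStep, h.2.1)

/-- Annotate a list of steps with counters given by `c`. -/
def annotate : List (S × A × B) → (ℕ → ℕ) → List ((S × ℕ) × A × B)
  | [], _ => []
  | (s, a, b) :: t, c => ((s, c 0), a, b) :: annotate t (fun i => c (i + 1))

/-- Annotate a list of steps with the consecutive counters `k, k+1, …`. -/
def addCtr (k : ℕ) (l : List (S × A × B)) : List ((S × ℕ) × A × B) :=
  annotate l (fun i => k + i)

@[simp] lemma annotate_nil (c : ℕ → ℕ) : annotate ([] : List (S × A × B)) c = [] := rfl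

lemma annotate_cons (s : S) (a : A) (b : B) (t : List (S × A × B)) (c : ℕ → ℕ) :
    annotate ((s, a, b) :: t) c = ((s, c 0), a, b) :: annotate t (fun i => c (i + 1)) := rfl

@[simp] lemma addCtr_nil (k : ℕ) : addCtr k ([] : List (S × A × B)) = [] := rfl

lemma addCtr_cons (k : ℕ) (s : S) (a : A) (b : B) (t : List (S × A × B)) :
    addCtr k ((s, a, b) :: t) = ((s, k), a, b) :: addCtr (k + 1) t := by
  simp only [addCtr, annotate_cons, Nat.add_zero]
  congr 1
  exact congrArg (annotate t) (funext fun i => by omega)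

@[simp] lemma annotate_length (l : List (S × A × B)) :
    ∀ c, (annotate l c).length = l.length := by
  induction l with
  | nil => intro c; rfl
  | cons x t ih => obtain ⟨s, a, b⟩ := x; intro c; simp [annotate_cons, ih]

@[simp] lemma addCtr_length (k : ℕ) (l : List (S × A × B)) :
    (addCtr k l).length = l.length := annotate_length l _

lemma annotate_get (l : List (S × A × B)) :
    ∀ (c : ℕ → ℕ) (i : ℕ) (h : i < l.length) (h' : i < (annotate l c).length),
    (annotate l c).get ⟨i, h'⟩ = (((l.get ⟨i, h⟩).1, c i), (l.get ⟨i, h⟩).2) := by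
  induction l with
  | nil => intro c i h h'; simp at h
  | cons x t ih =>
    intro c i h h'
    obtain ⟨s, a, b⟩ := x
    cases i with
    | zero => rfl
    | succ j =>
      exact ih (fun i => c (i + 1)) j (by simpa using h) (by simpa using h')

@[simp] lemma map_projStep_annotate (l : List (S × A × B)) :
    ∀ c, (annotate l c).map projStep = l := by
  induction l with
  | nil => intro c; rfl
  | cons x t ih => obtain ⟨s, a, b⟩ := x; intro c; simp [annotate_cons, projStep, ih]

lemma map_projStep_addCtr (k : ℕ) (l : List (S × A × B)) :
    (addCtr k l).map projStep = l := map_projStep_annotate l _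

lemma annotate_eq_addCtr (l : List (S × A × B)) :
    ∀ (c : ℕ → ℕ) (k : ℕ), (∀ i < l.length, c i = k + i) → annotate l c = addCtr k l := by
  induction l with
  | nil => intros; rfl
  | cons x t ih =>
    intro c k hc
    obtain ⟨s, a, b⟩ := x
    rw [annotate_cons, addCtr_cons]
    have h0 : c 0 = k := by have := hc 0 (by simp); omega
    rw [h0]
    congr 1
    exact ih _ (k + 1) (fun i hi => by
      have := hc (i + 1) (by simp; omega); omega)

lemma eq_addCtr_of_get (l' : List ((S × ℕ) × A × B)) :
    ∀ k : ℕ, (∀ i (h : i < l'.length), (l'.get ⟨i, h⟩).1.2 = k + i) →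
    l' = addCtr k (l'.map projStep) := by
  induction l' with
  | nil => intros; rfl
  | cons x t ih =>
    intro k hc
    obtain ⟨⟨s, j⟩, a, b⟩ := x
    have h0 : j = k := by have := hc 0 (by simp); simpa using this
    rw [List.map_cons, show projStep ((s, j), a, b) = (s, a, b) from rfl, addCtr_cons, h0]
    congr 1
    exact ih (k + 1) (fun i h => by
      have := hc (i + 1) (by simpa using Nat.succ_lt_succ h)
      simp only [List.get_cons_succ] at this
      omega)

lemma headState_addCtr (k : ℕ) (t : List (S × A × B)) (s : S) :
    headState (addCtr k t) (s, k + t.length) = (headState t s, k) := by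
  cases t with
  | nil => rfl
  | cons x t' => obtain ⟨s1, a, b⟩ := x; rw [addCtr_cons]; rfl

/-- The unfolded (acyclic) game: states are pairs (state, step counter). -/
noncomputable def liftG (G : ConcurrentGame S A B) : ConcurrentGame (S × ℕ) A B where
  actA p := G.actA p.1
  actB p := G.actB p.1
  actA_nonempty p := G.actA_nonempty p.1
  actA_countable p := G.actA_countable p.1
  actB_nonempty p := G.actB_nonempty p.1
  actB_finite p := G.actB_finite p.1
  trans p a b := (G.trans p.1 a b).map (fun s' => (s', p.2 + 1))

lemma liftG_trans_apply (G : ConcurrentGame S A B) (s : S) (k : ℕ) (a : A) (b : B)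
    (x : S) (j : ℕ) :
    (liftG G).trans (s, k) a b (x, j) = if j = k + 1 then G.trans s a b x else 0 := by
  show ((G.trans s a b).map (fun s' => (s', k + 1))) (x, j) = _
  rw [PMF.map_apply]
  split_ifs with h
  · subst h
    rw [tsum_eq_single x]
    · simp
    · intro y hy
      simp only [Prod.mk.injEq, ite_eq_right_iff, and_imp]
      intro h1 _; exact absurd h1.symm hy
  · rw [ENNReal.tsum_eq_zero]
    intro y
    simp only [Prod.mk.injEq, ite_eq_right_iff, and_imp]
    intro _ h2; exact absurd h2 h

lemma liftG_acyclic (G : ConcurrentGame S A B) : (liftG G).Acyclic := by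
  intro n f a b hleg
  have key : ∀ i, i ≤ n + 1 → (f i).2 = (f 0).2 + i := by
    intro i
    induction i with
    | zero => intro _; rfl
    | succ j ih =>
      intro hj
      have hsup := (hleg j (by omega)).2.2
      rw [show (liftG G).trans (f j) (a j) (b j)
            = (G.trans (f j).1 (a j) (b j)).map (fun s' => (s', (f j).2 + 1)) from rfl,
          PMF.support_map] at hsup
      obtain ⟨y, -, hy⟩ := hsup
      have h1 : (f (j + 1)).2 = (f j).2 + 1 := by rw [← hy]
      have h2 := ih (by omega)
      omega
  intro hEq
  have := key (n + 1) le_rfl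
  rw [hEq] at this
  omega

/-- Transfer of a 1-bit strategy in the unfolded game to a 1-bit Markov strategy. -/
noncomputable def liftTau (G : ConcurrentGame S A B) (τ' : MemoryStrategy (liftG G) Bool) :
    MemoryStrategy G (ℕ × Bool) where
  act m s := τ'.act m.2 (s, m.1)
  upd s m a b s' := (τ'.upd (s, m.1) m.2 a b (s', m.1 + 1)).map (fun x => (m.1 + 1, x))
  act_mem m s a ha := τ'.act_mem m.2 (s, m.1) a ha

lemma liftTau_stepCounter (G : ConcurrentGame S A B) (τ' : MemoryStrategy (liftG G) Bool) :
    (liftTau G τ').StepCounter := by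
  intro s m a b s' m' hm'
  rw [show (liftTau G τ').upd s m a b s'
        = (τ'.upd (s, m.1) m.2 a b (s', m.1 + 1)).map (fun x => (m.1 + 1, x)) from rfl,
      PMF.support_map] at hm'
  obtain ⟨x, -, hx⟩ := hm'
  rw [← hx]

lemma liftTau_dirac (G : ConcurrentGame S A B) (τ' : MemoryStrategy (liftG G) Bool)
    (hD : τ'.DiracUpdates) : (liftTau G τ').DiracUpdates := by
  intro s m a b s'
  obtain ⟨m0, h0⟩ := hD (s, m.1) m.2 a b (s', m.1 + 1)
  refine ⟨(m.1 + 1, m0), ?_⟩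
  show (τ'.upd (s, m.1) m.2 a b (s', m.1 + 1)).map (fun x => (m.1 + 1, x)) = _
  rw [h0, PMF.pure_map]

lemma liftG_turnBased (G : ConcurrentGame S A B) (h : G.TurnBased) :
    (liftG G).TurnBased := by
  intro p
  rcases h p.1 with h1 | h1
  · left; intro a ha a' ha' b hb
    show (G.trans p.1 a b).map _ = (G.trans p.1 a' b).map _
    rw [h1 a ha a' ha' b hb]
  · right; intro a ha b hb b' hb'
    show (G.trans p.1 a b).map _ = (G.trans p.1 a b').map _
    rw [h1 a ha b hb b' hb']

lemma liftTau_det (G : ConcurrentGame S A B) (τ' : MemoryStrategy (liftG G) Bool)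
    (h : τ'.Deterministic) : (liftTau G τ').Deterministic :=
  fun m s => h m.2 (s, m.1)

lemma tsum_pure_mul {M : Type} (m0 : M) (f : M → ℝ≥0∞) :
    ∑' m, (PMF.pure m0) m * f m = f m0 := by
  rw [tsum_eq_single m0]
  · simp [PMF.pure_apply]
  · intro m hm; simp [PMF.pure_apply, hm]

lemma histProbMem_lift_ne_zero {M : Type} (G : ConcurrentGame S A B)
    (act : M → S × ℕ → PMF A) (upd : (S × ℕ) → M → A → B → (S × ℕ) → PMF M) :
    ∀ (l' : List ((S × ℕ) × A × B)) (g : Hist (S × ℕ) A B → PMF B) (m : M)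
      (p : S × ℕ) (s' : S × ℕ),
    histProbMem (liftG G) act upd g m p l' s' ≠ 0 →
    (∀ i (h : i < l'.length), (l'.get ⟨i, h⟩).1.2 = p.2 + i) ∧ s'.2 = p.2 + l'.length := by
  intro l'
  induction l' with
  | nil =>
    intro g m p s' h
    rw [histProbMem] at h
    split_ifs at h with hc
    · subst hc
      exact ⟨fun i hi => absurd hi (by simp), by simp⟩
    · exact absurd rfl h
  | cons x t ih =>
    intro g m p s' h
    obtain ⟨⟨s1, j⟩, a, b⟩ := x
    rw [histProbMem] at h
    split_ifs at h with hc
    · have h1 : (liftG G).trans p a b (headState t s') ≠ 0 := by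
        intro h0; apply h; rw [h0]; ring
      have h2 : (∑' m', upd p m a b (headState t s') m' *
          histProbMem (liftG G) act upd (shiftF g (p, a, b)) m' (headState t s') t s') ≠ 0 := by
        intro h0; apply h; rw [h0]; ring
      have hq2 : (headState t s').2 = p.2 + 1 := by
        have h1' := h1
        rw [show p = (p.1, p.2) from rfl, show headState t s' = ((headState t s').1, (headState t s').2) from rfl,
          liftG_trans_apply] at h1'
        by_contra hne
        rw [if_neg hne] at h1'
        exact h1' rfl
      obtain ⟨m', hm'⟩ : ∃ m', upd p m a b (headState t s') m' *
          histProbMem (liftG G) act upd (shiftF g (p, a, b)) m' (headState t s') t s' ≠ 0 := by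
        by_contra hall
        push_neg at hall
        exact h2 (ENNReal.tsum_eq_zero.mpr hall)
      have h3 : histProbMem (liftG G) act upd (shiftF g (p, a, b)) m' (headState t s') t s' ≠ 0 :=
        fun h0 => hm' (by rw [h0, mul_zero])
      obtain ⟨ih1, ih2⟩ := ih (shiftF g (p, a, b)) m' (headState t s') s' h3
      constructor
      · intro i hi
        cases i with
        | zero =>
          have : j = p.2 := congrArg Prod.snd hc
          simpa using this
        | succ i2 =>
          have := ih1 i2 (by simpa using hi)
          simp only [List.get_cons_succ]
          omega
      · have : s'.2 = (headState t s').2 + t.length := ih2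
        simp only [List.length_cons]
        omega
    · exact absurd rfl h

lemma histProb_lift_ne_zero (G : ConcurrentGame S A B) :
    ∀ (l' : List ((S × ℕ) × A × B)) (f : Hist (S × ℕ) A B → PMF A)
      (g : Hist (S × ℕ) A B → PMF B) (p : S × ℕ) (s' : S × ℕ),
    histProb (liftG G) f g p l' s' ≠ 0 →
    (∀ i (h : i < l'.length), (l'.get ⟨i, h⟩).1.2 = p.2 + i) ∧ s'.2 = p.2 + l'.length := by
  intro l'
  induction l' with
  | nil =>
    intro f g p s' h
    rw [histProb] at h
    split_ifs at h with hc
    · subst hc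
      exact ⟨fun i hi => absurd hi (by simp), by simp⟩
    · exact absurd rfl h
  | cons x t ih =>
    intro f g p s' h
    obtain ⟨⟨s1, j⟩, a, b⟩ := x
    rw [histProb] at h
    split_ifs at h with hc
    · have h1 : (liftG G).trans p a b (headState t s') ≠ 0 := by
        intro h0; apply h; rw [h0]; ring
      have h3 : histProb (liftG G) (shiftF f (p, a, b)) (shiftF g (p, a, b)) (headState t s') t s' ≠ 0 := by
        intro h0; apply h; rw [h0]; ring
      have hq2 : (headState t s').2 = p.2 + 1 := by
        have h1' := h1
        rw [show p = (p.1, p.2) from rfl, show headState t s' = ((headState t s').1, (headState t s').2) from rfl,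
          liftG_trans_apply] at h1'
        by_contra hne
        rw [if_neg hne] at h1'
        exact h1' rfl
      obtain ⟨ih1, ih2⟩ := ih (shiftF f (p, a, b)) (shiftF g (p, a, b)) (headState t s') s' h3
      constructor
      · intro i hi
        cases i with
        | zero =>
          have : j = p.2 := congrArg Prod.snd hc
          simpa using this
        | succ i2 =>
          have := ih1 i2 (by simpa using hi)
          simp only [List.get_cons_succ]
          omega
      · have : s'.2 = (headState t s').2 + t.length := ih2
        simp only [List.length_cons]
        omega
    · exact absurd rfl h

lemma histProbMem_lift_eq (G : ConcurrentGame S A B) (τ' : MemoryStrategy (liftG G) Bool)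
    (hD : τ'.DiracUpdates) :
    ∀ (l : List (S × A × B)) (g : Hist S A B → PMF B) (g' : Hist (S × ℕ) A B → PMF B)
      (k : ℕ) (m : Bool) (s0 s : S),
    (∀ (mm : List (S × A × B)) (t : S), g' (addCtr k mm, (t, k + mm.length)) = g (mm, t)) →
    histProbMem (liftG G) τ'.act τ'.upd g' m (s0, k) (addCtr k l) (s, k + l.length) =
      histProbMem G (liftTau G τ').act (liftTau G τ').upd g (k, m) s0 l s := by
  intro l
  induction l with
  | nil =>
    intro g g' k m s0 s hg
    simp only [addCtr_nil, List.length_nil, Nat.add_zero, histProbMem]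
    by_cases h : s = s0 <;> simp [h, Prod.ext_iff]
  | cons x t ih =>
    intro g g' k m s0 s hg
    obtain ⟨s1, a, b⟩ := x
    rw [addCtr_cons]
    have hcnt : ((s : S), k + ((s1, a, b) :: t).length) = (s, (k + 1) + t.length) := by
      simp only [List.length_cons]; rw [show k + (t.length + 1) = (k + 1) + t.length from by omega]
    rw [hcnt]
    rw [histProbMem, histProbMem]
    by_cases hc : s1 = s0
    · subst hc
      rw [if_pos rfl, if_pos rfl]
      rw [headState_addCtr]
      have hact : τ'.act m (s1, k) a = (liftTau G τ').act (k, m) s1 a := rfl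
      have hgb : g' ([], (s1, k)) b = g ([], s1) b := by
        have := hg [] s1
        simp only [addCtr_nil, List.length_nil, Nat.add_zero] at this
        rw [this]
      have htrans : (liftG G).trans (s1, k) a b (headState t s, k + 1)
          = G.trans s1 a b (headState t s) := by
        rw [liftG_trans_apply, if_pos rfl]
      obtain ⟨m0, hm0⟩ := hD (s1, k) m a b (headState t s, k + 1)
      have hupd : (liftTau G τ').upd s1 (k, m) a b (headState t s) = PMF.pure (k + 1, m0) := by
        show (τ'.upd (s1, k) m a b (headState t s, k + 1)).map (fun x => (k + 1, x)) = _
        rw [hm0, PMF.pure_map]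
      rw [hact, hgb, htrans, hm0, hupd, tsum_pure_mul, tsum_pure_mul]
      congr 1
      have hg' : ∀ (mm : List (S × A × B)) (t' : S),
          (shiftF g' ((s1, k), a, b)) (addCtr (k + 1) mm, (t', (k + 1) + mm.length))
            = (shiftF g (s1, a, b)) (mm, t') := by
        intro mm t'
        show g' (((s1, k), a, b) :: addCtr (k + 1) mm, (t', (k + 1) + mm.length))
          = g ((s1, a, b) :: mm, t')
        rw [← addCtr_cons, show (k + 1) + mm.length = k + ((s1, a, b) :: mm).length from by
          simp only [List.length_cons]; omega]
        exact hg _ _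
      exact ih (shiftF g (s1, a, b)) (shiftF g' ((s1, k), a, b)) (k + 1) m0 (headState t s) s hg'
    · rw [if_neg (by simp [Prod.ext_iff, hc]), if_neg hc]

lemma histProb_lift_eq (G : ConcurrentGame S A B) :
    ∀ (l : List (S × A × B)) (f : Hist S A B → PMF A) (f' : Hist (S × ℕ) A B → PMF A)
      (g : Hist S A B → PMF B) (g' : Hist (S × ℕ) A B → PMF B) (k : ℕ) (s0 s : S),
    (∀ (mm : List (S × A × B)) (t : S), f' (addCtr k mm, (t, k + mm.length)) = f (mm, t)) →
    (∀ (mm : List (S × A × B)) (t : S), g' (addCtr k mm, (t, k + mm.length)) = g (mm, t)) →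
    histProb (liftG G) f' g' (s0, k) (addCtr k l) (s, k + l.length) =
      histProb G f g s0 l s := by
  intro l
  induction l with
  | nil =>
    intro f f' g g' k s0 s hf hg
    simp only [addCtr_nil, List.length_nil, Nat.add_zero, histProb]
    by_cases h : s = s0 <;> simp [h, Prod.ext_iff]
  | cons x t ih =>
    intro f f' g g' k s0 s hf hg
    obtain ⟨s1, a, b⟩ := x
    rw [addCtr_cons]
    have hcnt : ((s : S), k + ((s1, a, b) :: t).length) = (s, (k + 1) + t.length) := by
      simp only [List.length_cons]; rw [show k + (t.length + 1) = (k + 1) + t.length from by omega]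
    rw [hcnt]
    rw [histProb, histProb]
    by_cases hc : s1 = s0
    · subst hc
      rw [if_pos rfl, if_pos rfl]
      rw [headState_addCtr]
      have hfa : f' ([], (s1, k)) a = f ([], s1) a := by
        have := hf [] s1
        simp only [addCtr_nil, List.length_nil, Nat.add_zero] at this
        rw [this]
      have hgb : g' ([], (s1, k)) b = g ([], s1) b := by
        have := hg [] s1
        simp only [addCtr_nil, List.length_nil, Nat.add_zero] at this
        rw [this]
      have htrans : (liftG G).trans (s1, k) a b (headState t s, k + 1)
          = G.trans s1 a b (headState t s) := by
        rw [liftG_trans_apply, if_pos rfl]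
      rw [hfa, hgb, htrans]
      congr 1
      have hf' : ∀ (mm : List (S × A × B)) (t' : S),
          (shiftF f' ((s1, k), a, b)) (addCtr (k + 1) mm, (t', (k + 1) + mm.length))
            = (shiftF f (s1, a, b)) (mm, t') := by
        intro mm t'
        show f' (((s1, k), a, b) :: addCtr (k + 1) mm, (t', (k + 1) + mm.length))
          = f ((s1, a, b) :: mm, t')
        rw [← addCtr_cons, show (k + 1) + mm.length = k + ((s1, a, b) :: mm).length from by
          simp only [List.length_cons]; omega]
        exact hf _ _
      have hg' : ∀ (mm : List (S × A × B)) (t' : S),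
          (shiftF g' ((s1, k), a, b)) (addCtr (k + 1) mm, (t', (k + 1) + mm.length))
            = (shiftF g (s1, a, b)) (mm, t') := by
        intro mm t'
        show g' (((s1, k), a, b) :: addCtr (k + 1) mm, (t', (k + 1) + mm.length))
          = g ((s1, a, b) :: mm, t')
        rw [← addCtr_cons, show (k + 1) + mm.length = k + ((s1, a, b) :: mm).length from by
          simp only [List.length_cons]; omega]
        exact hg _ _
      exact ih (shiftF f (s1, a, b)) (shiftF f' ((s1, k), a, b))
        (shiftF g (s1, a, b)) (shiftF g' ((s1, k), a, b)) (k + 1) (headState t s) s hf' hg'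
    · rw [if_neg (by simp [Prod.ext_iff, hc]), if_neg hc]

lemma measurable_eval (n : ℕ) :
    @Measurable (Play S A B) (S × A × B) (playMeasurableSpace S A B) ⊤ (fun ω => ω n) :=
  @measurable_pi_apply ℕ (fun _ => S × A × B) (fun _ => ⊤) n

lemma measurable_cylinder (l : List (S × A × B)) (s : S) :
    MeasurableSet (cylinder l s) := by
  have hEq : cylinder l s =
      (⋂ i : Fin l.length, (fun ω : Play S A B => ω i.1) ⁻¹' {l.get i}) ∩
        ((fun ω : Play S A B => ω l.length) ⁻¹' {x | x.1 = s}) := by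
    ext ω
    simp [cylinder, Set.mem_iInter]
  rw [hEq]
  exact MeasurableSet.inter
    (MeasurableSet.iInter (fun i => measurable_eval i.1 MeasurableSpace.measurableSet_top))
    (measurable_eval l.length MeasurableSpace.measurableSet_top)

lemma measurable_buchi (T : Set S) : MeasurableSet (buchi T : Set (Play S A B)) := by
  have hEq : (buchi T : Set (Play S A B)) =
      ⋂ n : ℕ, ⋃ m : ℕ, ⋃ (_ : n ≤ m), (fun ω : Play S A B => ω m) ⁻¹' {x | x.1 ∈ T} := by
    ext ω
    simp [buchi]
  rw [hEq]
  exact MeasurableSet.iInter fun n => MeasurableSet.iUnion fun m =>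
    MeasurableSet.iUnion fun _ => measurable_eval m MeasurableSpace.measurableSet_top

/-- Annotate a play with the step counters. -/
def liftPlay : Play S A B → Play (S × ℕ) A B := fun ω n => (((ω n).1, n), (ω n).2)

/-- Forget the step counters of an annotated play. -/
def projPlay : Play (S × ℕ) A B → Play S A B := fun ω n => ((ω n).1.1, (ω n).2)

lemma measurable_liftPlay : Measurable (liftPlay : Play S A B → Play (S × ℕ) A B) :=
  @measurable_pi_lambda (Play S A B) ℕ (fun _ => (S × ℕ) × A × B) (playMeasurableSpace S A B)
    (fun _ => ⊤) liftPlay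
    (fun n => (@measurable_from_top (S × A × B) ((S × ℕ) × A × B) ⊤
      (fun x => ((x.1, n), x.2))).comp (measurable_eval n))

lemma measurable_projPlay : Measurable (projPlay : Play (S × ℕ) A B → Play S A B) :=
  @measurable_pi_lambda (Play (S × ℕ) A B) ℕ (fun _ => S × A × B)
    (playMeasurableSpace (S × ℕ) A B) (fun _ => ⊤) projPlay
    (fun n => (@measurable_from_top ((S × ℕ) × A × B) (S × A × B) ⊤
      (fun x => (x.1.1, x.2))).comp (measurable_eval n))

lemma liftPlay_preimage_buchi (T : Set S) :
    liftPlay ⁻¹' (buchi (Prod.fst ⁻¹' T) : Set (Play (S × ℕ) A B)) = buchi T := rfl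

lemma projPlay_preimage_buchi (T : Set S) :
    projPlay ⁻¹' (buchi T : Set (Play S A B)) = buchi (Prod.fst ⁻¹' T) := rfl

lemma liftPlay_preimage_cylinder_good (l' : List ((S × ℕ) × A × B)) (s' : S × ℕ)
    (hc : ∀ i (h : i < l'.length), (l'.get ⟨i, h⟩).1.2 = i) (hs : s'.2 = l'.length) :
    liftPlay ⁻¹' (cylinder l' s') = cylinder (l'.map projStep) s'.1 := by
  ext ω
  simp only [cylinder, Set.mem_preimage, Set.mem_setOf_eq, List.length_map, Fin.forall_iff]
  constructor
  · rintro ⟨h1, h2⟩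
    constructor
    · intro i h
      have hh := h1 i h
      rw [show ∀ hh', (l'.map projStep).get ⟨i, hh'⟩ = projStep (l'.get ⟨i, h⟩) from fun _ => by simp]
      rw [← hh]
      rfl
    · have := congrArg Prod.fst h2
      simpa [liftPlay] using this
  · rintro ⟨h1, h2⟩
    constructor
    · intro i h
      have hωi := h1 i h
      rw [show ∀ hh', (l'.map projStep).get ⟨i, hh'⟩ = projStep (l'.get ⟨i, h⟩) from fun _ => by simp] at hωi
      have hcnt := hc i h
      show (((ω i).1, i), (ω i).2) = l'.get ⟨i, h⟩
      have h1' : (ω i).1 = (l'.get ⟨i, h⟩).1.1 := congrArg Prod.fst hωi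
      have h2' : (ω i).2 = (l'.get ⟨i, h⟩).2 := congrArg Prod.snd hωi
      exact Prod.ext (Prod.ext h1' hcnt.symm) h2'
    · show ((ω l'.length).1, l'.length) = s'
      exact Prod.ext (by exact h2) hs.symm

lemma liftPlay_preimage_cylinder_bad (l' : List ((S × ℕ) × A × B)) (s' : S × ℕ)
    (hbad : ¬((∀ i (h : i < l'.length), (l'.get ⟨i, h⟩).1.2 = i) ∧ s'.2 = l'.length)) :
    liftPlay ⁻¹' (cylinder l' s') = ∅ := by
  ext ω
  simp only [Set.mem_preimage, Set.mem_empty_iff_false, iff_false]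
  rintro ⟨h1, h2⟩
  refine hbad ⟨fun i h => ?_, ?_⟩
  · rw [← h1 ⟨i, h⟩]; rfl
  · rw [← h2]; rfl

lemma projPlay_preimage_cylinder (l : List (S × A × B)) (s : S) :
    projPlay ⁻¹' (cylinder l s : Set (Play S A B)) =
      ⋃ q : (Fin l.length → ℕ) × ℕ,
        cylinder (annotate l (fun i => if h : i < l.length then q.1 ⟨i, h⟩ else 0)) (s, q.2) := by
  ext ω
  simp only [Set.mem_preimage, Set.mem_iUnion, cylinder, Set.mem_setOf_eq, Fin.forall_iff,
    annotate_length]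
  constructor
  · rintro ⟨h1, h2⟩
    refine ⟨(fun i => (ω i.1).1.2, (ω l.length).1.2), fun i h => ?_, ?_⟩
    · rw [annotate_get l _ i h]
      have hωi := h1 i h
      have ha : (ω i).1.1 = (l.get ⟨i, h⟩).1 := congrArg Prod.fst hωi
      have hb : (ω i).2 = (l.get ⟨i, h⟩).2 := congrArg Prod.snd hωi
      simp only [h, dif_pos]
      rw [← ha, ← hb]
    · exact Prod.ext (by exact h2) rfl
  · rintro ⟨q, h1, h2⟩
    constructor
    · intro i h
      have hωi := h1 i h
      rw [annotate_get l _ i h] at hωi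
      show ((ω i).1.1, (ω i).2) = l.get ⟨i, h⟩
      have ha := congrArg Prod.fst (congrArg Prod.fst hωi)
      have hb := congrArg Prod.snd hωi
      simp only at ha hb
      rw [ha, hb]
    · exact congrArg Prod.fst h2

lemma val_le_liftG (G : ConcurrentGame S A B) (T : Set S) (s0 : S) :
    val G (buchi T) s0 ≤ val (liftG G) (buchi (Prod.fst ⁻¹' T)) (s0, 0) := by
  rw [val, val]
  apply iSup_le
  intro σ
  set σ' : (liftG G).MaxStrategy :=
    ⟨fun h => σ.toFun (projHist h), fun h a ha => σ.mem_actA (projHist h) a ha⟩ with hσ'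
  refine le_trans ?_ (le_iSup _ σ')
  apply le_iInf; intro π'
  apply le_iInf; rintro ⟨P', hP'⟩
  set π : G.MinStrategy :=
    ⟨fun h => π'.toFun (addCtr 0 h.1, (h.2, h.1.length)),
     fun h b hb => π'.mem_actB _ b hb⟩ with hπ
  set P : Measure (Play S A B) := P'.map projPlay with hPdef
  have hf : ∀ (mm : List (S × A × B)) (t : S),
      σ'.toFun (addCtr 0 mm, (t, 0 + mm.length)) = σ.toFun (mm, t) := by
    intro mm t
    show σ.toFun (projHist (addCtr 0 mm, (t, 0 + mm.length))) = σ.toFun (mm, t)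
    simp [projHist, map_projStep_addCtr]
  have hg : ∀ (mm : List (S × A × B)) (t : S),
      π'.toFun (addCtr 0 mm, (t, 0 + mm.length)) = π.toFun (mm, t) := by
    intro mm t
    show _ = π'.toFun (addCtr 0 mm, (t, mm.length))
    rw [Nat.zero_add]
  have hcons : Consistent G s0 σ π P := by
    constructor
    · haveI := hP'.1
      exact Measure.isProbabilityMeasure_map measurable_projPlay.aemeasurable
    · intro l s
      rw [hPdef, Measure.map_apply measurable_projPlay (measurable_cylinder l s),
        projPlay_preimage_cylinder]
      set c0 : (Fin l.length → ℕ) × ℕ := (fun i => i.1, l.length) with hc0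
      have hann : annotate l (fun i => if h : i < l.length then c0.1 ⟨i, h⟩ else 0)
          = addCtr 0 l :=
        annotate_eq_addCtr l _ 0 (fun i hi => by simp [hc0, hi])
      have hval : P' (cylinder
            (annotate l (fun i => if h : i < l.length then c0.1 ⟨i, h⟩ else 0)) (s, c0.2))
          = histProb G σ.toFun π.toFun s0 l s := by
        rw [hP'.2, hann]
        rw [show ((s : S), c0.2) = (s, 0 + l.length) from by rw [hc0, Nat.zero_add]]
        exact histProb_lift_eq G l σ.toFun σ'.toFun π.toFun π'.toFun 0 s0 s hf hg
      apply le_antisymm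
      · refine le_trans (measure_iUnion_le _) ?_
        rw [tsum_eq_single c0 ?_]
        · exact le_of_eq hval
        · intro q hq
          rw [hP'.2]
          by_contra hne
          obtain ⟨hq1, hq2⟩ := histProb_lift_ne_zero G _ _ _ _ _ hne
          apply hq
          have hlen : q.2 = l.length := by
            simpa using hq2
          have hfun : q.1 = fun i => i.1 := by
            funext i
            have := hq1 i.1 (by rw [annotate_length]; exact i.2)
            rw [annotate_get l _ i.1 i.2] at this
            simpa [i.2] using this
          rw [hc0]
          exact Prod.ext hfun hlen
      · exact le_trans (le_of_eq hval.symm) (measure_mono (Set.subset_iUnion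
          (fun q : (Fin l.length → ℕ) × ℕ => cylinder
            (annotate l fun i => if h : i < l.length then q.1 ⟨i, h⟩ else 0) (s, q.2)) c0))
  refine le_trans (iInf_le _ π) ?_
  refine le_trans (iInf_le _ ⟨P, hcons⟩) ?_
  have hEq : P (buchi T) = P' (buchi (Prod.fst ⁻¹' T)) := by
    rw [hPdef, Measure.map_apply measurable_projPlay (measurable_buchi T),
      projPlay_preimage_buchi]
  exact le_of_eq hEq

end AcyclicReduction

/-- **Reduction from general to acyclic Büchi games.**
If in every acyclic Büchi game Max has, for every `ε > 0`, a 1-bit strategy with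
Dirac updates that is multiplicatively ε-optimal from every state when started in
mode `0` (deterministic if the game is turn-based), then in every Büchi game Max
has, for every `ε > 0`, a 1-bit Markov strategy with Dirac updates that is
multiplicatively ε-optimal from every state when started with step counter `0` and
bit `0` (deterministic if the game is turn-based). -/
theorem acyclic_reduction
    (hyp : ∀ (S' A' B' : Type) [Countable S'] (G' : ConcurrentGame S' A' B')
        (T' : Set S'), G'.Acyclic → ∀ ε : ℝ≥0∞, 0 < ε →
      ∃ τ : MemoryStrategy G' Bool,
        τ.DiracUpdates ∧
        (∀ (s0 : S') (π : G'.MinStrategy) (P : Measure (Play S' A' B')),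
          ConsistentMem G' s0 τ false π P →
            (1 - ε) * val G' (buchi T') s0 ≤ P (buchi T')) ∧
        (G'.TurnBased → τ.Deterministic)) :
    ∀ (S A B : Type) [Countable S] (G : ConcurrentGame S A B) (T : Set S)
      (ε : ℝ≥0∞), 0 < ε →
      ∃ τ : MemoryStrategy G (ℕ × Bool),
        τ.StepCounter ∧ τ.DiracUpdates ∧
        (∀ (s0 : S) (π : G.MinStrategy) (P : Measure (Play S A B)),
          ConsistentMem G s0 τ (0, false) π P →
            (1 - ε) * val G (buchi T) s0 ≤ P (buchi T)) ∧
        (G.TurnBased → τ.Deterministic) := by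
  intro S A B _ G T ε hε
  obtain ⟨τ', hD', hopt', hdet'⟩ :=
    hyp (S × ℕ) A B (liftG G) (Prod.fst ⁻¹' T) (liftG_acyclic G) ε hε
  refine ⟨liftTau G τ', liftTau_stepCounter G τ', liftTau_dirac G τ' hD', ?_,
    fun htb => liftTau_det G τ' (hdet' (liftG_turnBased G htb))⟩
  intro s0 π P hP
  set π' : (liftG G).MinStrategy :=
    ⟨fun h => π.toFun (projHist h), fun h b hb => π.mem_actB (projHist h) b hb⟩ with hπ'
  set P' : Measure (Play (S × ℕ) A B) := P.map liftPlay with hP'def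
  have hg : ∀ (mm : List (S × A × B)) (t : S),
      π'.toFun (addCtr 0 mm, (t, 0 + mm.length)) = π.toFun (mm, t) := by
    intro mm t
    show π.toFun (projHist (addCtr 0 mm, (t, 0 + mm.length))) = π.toFun (mm, t)
    simp [projHist, map_projStep_addCtr]
  have hconsMem : ConsistentMem (liftG G) (s0, 0) τ' false π' P' := by
    constructor
    · haveI := hP.1
      exact Measure.isProbabilityMeasure_map measurable_liftPlay.aemeasurable
    · intro l' s'
      rw [hP'def, Measure.map_apply measurable_liftPlay (measurable_cylinder l' s')]
      by_cases hgood : (∀ i (h : i < l'.length), (l'.get ⟨i, h⟩).1.2 = i) ∧ s'.2 = l'.length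
      · rw [liftPlay_preimage_cylinder_good l' s' hgood.1 hgood.2, hP.2]
        have hl' : l' = addCtr 0 (l'.map projStep) :=
          eq_addCtr_of_get l' 0 (fun i h => by rw [hgood.1 i h, Nat.zero_add])
        have hs' : s' = ((s'.1 : S), 0 + (l'.map projStep).length) :=
          Prod.ext rfl (by simp [hgood.2])
        conv_rhs => rw [hl', hs']
        exact (histProbMem_lift_eq G τ' hD' (l'.map projStep) π.toFun π'.toFun 0 false s0
          s'.1 hg).symm
      · rw [liftPlay_preimage_cylinder_bad l' s' hgood, measure_empty]
        symm
        by_contra hne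
        obtain ⟨h1, h2⟩ := histProbMem_lift_ne_zero G τ'.act τ'.upd l' π'.toFun false (s0, 0)
          s' hne
        exact hgood ⟨fun i h => by have := h1 i h; simpa using this, by simpa using h2⟩
  have hopt := hopt' (s0, 0) π' P' hconsMem
  have hbuchi : P' (buchi (Prod.fst ⁻¹' T)) = P (buchi T) := by
    rw [hP'def, Measure.map_apply measurable_liftPlay (measurable_buchi _),
      liftPlay_preimage_buchi]
  calc (1 - ε) * val G (buchi T) s0
      ≤ (1 - ε) * val (liftG G) (buchi (Prod.fst ⁻¹' T)) (s0, 0) :=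
        mul_le_mul_right (val_le_liftG G T s0) _
    _ ≤ P' (buchi (Prod.fst ⁻¹' T)) := hopt
    _ = P (buchi T) := hbuchi


end ConcurrentGame
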